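/- Run OMP(A, b) with termination parameter ε = 0, where b is a nonzero vector lying in the column space of A. Then at every iteration k reached by the algorithm, the columns of A indexed by the support set T_k are linearly independent. -/

import Mathlib

open scoped RealInnerProductSpace Classical

noncomputable section

namespace SSCOMP

variable {D : ℕ}

noncomputable def ompSelect {ι : Type*} [Fintype ι] [LinearOrder ι] [Nonempty ι]
    (a : ι → EuclideanSpace ℝ (Fin D)) (q : EuclideanSpace ℝ (Fin D)) : ι :=
  (Finset.univ.filter fun i => ∀ m, |⟪a m, q⟫| ≤ |⟪a i, q⟫|).min' (by
    obtain ⟨i, -, hi⟩ := Finset.exists_max_image (Finset.univ : Finset ι)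
      (fun m => |⟪a m, q⟫|) Finset.univ_nonempty
    exact ⟨i, Finset.mem_filter.mpr ⟨Finset.mem_univ i, fun m => hi m (Finset.mem_univ m)⟩⟩)

noncomputable def ompState {ι : Type*} [Fintype ι] [LinearOrder ι]
    (a : ι → EuclideanSpace ℝ (Fin D)) (b : EuclideanSpace ℝ (Fin D)) :
    ℕ → Finset ι × EuclideanSpace ℝ (Fin D)
  | 0 => (∅, b)
  | k + 1 =>
    let s := ompState a b k
    if s.2 = 0 then s
    else if h : Nonempty ι then
      haveI := h
      let T' : Finset ι := insert (ompSelect a s.2) s.1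
      (T', b - (Submodule.orthogonalProjectionOnto (Submodule.span ℝ (a '' (T' : Set ι))) b :
        EuclideanSpace ℝ (Fin D)))
    else s

noncomputable def ompSupport {ι : Type*} [Fintype ι] [LinearOrder ι]
    (a : ι → EuclideanSpace ℝ (Fin D)) (b : EuclideanSpace ℝ (Fin D)) (k : ℕ) : Finset ι :=
  (ompState a b k).1

noncomputable def ompResidual {ι : Type*} [Fintype ι] [LinearOrder ι]
    (a : ι → EuclideanSpace ℝ (Fin D)) (b : EuclideanSpace ℝ (Fin D)) (k : ℕ) :
    EuclideanSpace ℝ (Fin D) :=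
  (ompState a b k).2

def IsOMPOutput {ι : Type*} [Fintype ι] [LinearOrder ι]
    (a : ι → EuclideanSpace ℝ (Fin D)) (b : EuclideanSpace ℝ (Fin D)) (kmax : ℕ)
    (c : ι → ℝ) : Prop :=
  (∀ m, c m ≠ 0 → m ∈ ompSupport a b kmax) ∧
  ∀ c' : ι → ℝ, (∀ m, c' m ≠ 0 → m ∈ ompSupport a b kmax) →
    ‖b - ∑ m, c m • a m‖ ≤ ‖b - ∑ m, c' m • a m‖

/-- Set of normalized nonzero residual directions of OMP(a, b) run with `ε = 0`
and `k_max` large enough. -/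
noncomputable def residualDirs {ι : Type*} [Fintype ι] [LinearOrder ι]
    (a : ι → EuclideanSpace ℝ (Fin D)) (b : EuclideanSpace ℝ (Fin D)) :
    Set (EuclideanSpace ℝ (Fin D)) :=
  {w | ∃ k, ompResidual a b k ≠ 0 ∧ w = ‖ompResidual a b k‖⁻¹ • ompResidual a b k}

/-- Coherence between two sets of unit-norm points. -/
noncomputable def coherence (A B : Set (EuclideanSpace ℝ (Fin D))) : ℝ :=
  sSup {r : ℝ | ∃ u ∈ A, ∃ v ∈ B, r = |⟪u, v⟫|}

/-- Symmetrized convex hull `conv(±A)`. -/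
noncomputable def symmHull (A : Set (EuclideanSpace ℝ (Fin D))) :
    Set (EuclideanSpace ℝ (Fin D)) :=
  convexHull ℝ (A ∪ (-A))

/-- Inradius of a convex body: the radius of the largest Euclidean ball
(within the linear span of the body) inscribed in it. -/
noncomputable def inradius (P : Set (EuclideanSpace ℝ (Fin D))) : ℝ :=
  sSup {r : ℝ | 0 ≤ r ∧ ∃ c ∈ Submodule.span ℝ P,
    ∀ y ∈ Submodule.span ℝ P, ‖y - c‖ ≤ r → y ∈ P}

variable {n N : ℕ}

/-- `X^i`: the set of data points lying in the `i`-th subspace. -/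
noncomputable def subX (S : Fin n → Submodule ℝ (EuclideanSpace ℝ (Fin D)))
    (x : Fin N → EuclideanSpace ℝ (Fin D)) (i : Fin n) : Set (EuclideanSpace ℝ (Fin D)) :=
  x '' {m | x m ∈ S i}

/-- `X^i_{-j}`: the set of data points lying in the `i`-th subspace, with `x j` removed. -/
noncomputable def subXmin (S : Fin n → Submodule ℝ (EuclideanSpace ℝ (Fin D)))
    (x : Fin N → EuclideanSpace ℝ (Fin D)) (i : Fin n) (j : Fin N) :
    Set (EuclideanSpace ℝ (Fin D)) :=
  x '' {m | x m ∈ S i ∧ m ≠ j}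

/-- `W_j^i`: the set of OMP residual directions associated with `X^i_{-j}` and `x j`. -/
noncomputable def Wji (S : Fin n → Submodule ℝ (EuclideanSpace ℝ (Fin D)))
    (x : Fin N → EuclideanSpace ℝ (Fin D)) (i : Fin n) (j : Fin N) :
    Set (EuclideanSpace ℝ (Fin D)) :=
  residualDirs (fun m : {m : Fin N // x m ∈ S i ∧ m ≠ j} => x m.1) (x j)

/-- `W^i`: the set of OMP residual directions associated with `X^i`. -/
noncomputable def Wfull (S : Fin n → Submodule ℝ (EuclideanSpace ℝ (Fin D)))
    (x : Fin N → EuclideanSpace ℝ (Fin D)) (i : Fin n) : Set (EuclideanSpace ℝ (Fin D)) :=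
  ⋃ j ∈ {j : Fin N | x j ∈ S i}, Wji S x i j

/-- `r_i := min_{j : x_j ∈ S_i} r(P^i_{-j})`. -/
noncomputable def rMin (S : Fin n → Submodule ℝ (EuclideanSpace ℝ (Fin D)))
    (x : Fin N → EuclideanSpace ℝ (Fin D)) (i : Fin n) : ℝ :=
  sInf {r : ℝ | ∃ j, x j ∈ S i ∧ r = inradius (symmHull (subXmin S x i j))}

/-- Cosine of the principal angle between two subspaces. -/
noncomputable def cosAngle (Si Sk : Submodule ℝ (EuclideanSpace ℝ (Fin D))) : ℝ :=
  sSup {r : ℝ | ∃ u ∈ Si, ∃ v ∈ Sk, ‖u‖ = 1 ∧ ‖v‖ = 1 ∧ r = ⟪u, v⟫}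


lemma ompSelect_max {ι : Type*} [Fintype ι] [LinearOrder ι] [Nonempty ι]
    (a : ι → EuclideanSpace ℝ (Fin D)) (q : EuclideanSpace ℝ (Fin D)) (m : ι) :
    |⟪a m, q⟫| ≤ |⟪a (ompSelect a q), q⟫| := by
  have h := Finset.min'_mem (Finset.univ.filter fun i => ∀ m, |⟪a m, q⟫| ≤ |⟪a i, q⟫|)
    (by
      obtain ⟨i, -, hi⟩ := Finset.exists_max_image (Finset.univ : Finset ι)
        (fun m => |⟪a m, q⟫|) Finset.univ_nonempty
      exact ⟨i, Finset.mem_filter.mpr ⟨Finset.mem_univ i, fun m => hi m (Finset.mem_univ m)⟩⟩)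
  exact (Finset.mem_filter.mp h).2 m

lemma omp_invariant {ι : Type*} [Fintype ι] [LinearOrder ι]
    (a : ι → EuclideanSpace ℝ (Fin D)) (b : EuclideanSpace ℝ (Fin D)) (k : ℕ) :
    ompResidual a b k = b - (Submodule.orthogonalProjectionOnto
      (Submodule.span ℝ (a '' ((ompSupport a b k : Finset ι) : Set ι))) b :
      EuclideanSpace ℝ (Fin D)) := by
  induction k with
  | zero =>
      simp [ompResidual, ompSupport, ompState, Finset.coe_empty, Set.image_empty,
        Submodule.span_empty]
      have hK : Submodule.span ℝ (a '' ((↑(∅ : Finset ι)) : Set ι)) = ⊥ := by simp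
      have hmem := (Submodule.orthogonalProjectionOnto (Submodule.span ℝ (a '' ((↑(∅ : Finset ι)) : Set ι))) b).2
      exact (by rw [(Submodule.mem_bot ℝ).mp (hK.le hmem), sub_zero] : b = b - ((Submodule.orthogonalProjectionOnto (Submodule.span ℝ (a '' ((↑(∅ : Finset ι)) : Set ι))) b : EuclideanSpace ℝ (Fin D))))
  | succ k ih =>
      by_cases hq : (ompState a b k).2 = 0
      · have h1 : ompState a b (k + 1) = ompState a b k := by
          simp [ompState, hq]
        unfold ompResidual ompSupport
        rw [h1]
        exact ih
      · by_cases hι : Nonempty ι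
        · have h1 : ompState a b (k + 1) =
            (insert (ompSelect a (ompState a b k).2) (ompState a b k).1,
              b - (Submodule.orthogonalProjectionOnto (Submodule.span ℝ (a ''
                ((insert (ompSelect a (ompState a b k).2) (ompState a b k).1 : Finset ι) :
                  Set ι))) b : EuclideanSpace ℝ (Fin D))) := by
            simp [ompState, hq, hι]
          unfold ompResidual ompSupport
          rw [h1]
        · have h1 : ompState a b (k + 1) = ompState a b k := by
            simp [ompState, hq, hι]
          unfold ompResidual ompSupport
          rw [h1]
          exact ih

/-- Run OMP(A, b) with `ε = 0`, where `b` is a nonzero vector in the column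
space of `A`. Then at every iteration reached by the algorithm, the columns of `A` indexed by
the support set `T_k` are linearly independent. -/
theorem omp_support_linearIndependent
    {D : ℕ} {ι : Type*} [Fintype ι] [LinearOrder ι]
    (a : ι → EuclideanSpace ℝ (Fin D)) (b : EuclideanSpace ℝ (Fin D))
    (hb : b ≠ 0) (hspan : b ∈ Submodule.span ℝ (Set.range a)) :
    ∀ k : ℕ, LinearIndependent ℝ (fun m : {t : ι // t ∈ ompSupport a b k} => a m.1) := by
  suffices H : ∀ k : ℕ, Set.InjOn a ((ompSupport a b k : Finset ι) : Set ι) ∧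
      LinearIndependent ℝ (fun v : (a '' ((ompSupport a b k : Finset ι) : Set ι)) =>
        (v : EuclideanSpace ℝ (Fin D))) by
    intro k
    exact (linearIndepOn_iff_image (H k).1).mpr (H k).2
  intro k
  induction k with
  | zero =>
      constructor
      · simp [ompSupport, ompState]
      · have : (a '' ((ompSupport a b 0 : Finset ι) : Set ι)) = (∅ : Set _) := by
          simp [ompSupport, ompState]
        rw [this]
        exact linearIndependent_empty_type
  | succ k ih =>
      by_cases hq : (ompState a b k).2 = 0
      · have h1 : ompState a b (k + 1) = ompState a b k := by
          simp [ompState, hq]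
        unfold ompSupport
        rw [h1]
        exact ih
      · by_cases hι : Nonempty ι
        · set q : EuclideanSpace ℝ (Fin D) := (ompState a b k).2 with hqdef
          set T : Finset ι := (ompState a b k).1 with hTdef
          set i₀ : ι := ompSelect a q with hi₀
          have hsupp : ompSupport a b (k + 1) = insert i₀ T := by
            have hq' : (ompState a b k).2 ≠ 0 := hq
            simp [ompSupport, ompState, hq', hι, hi₀]
            rfl
          have hqres : ompResidual a b k = q := rfl
          have hTsupp : ompSupport a b k = T := rfl
          -- orthogonality of the residual to the current span
          have hperp : q ∈ (Submodule.span ℝ (a '' (T : Set ι)))ᗮ := by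
            have := omp_invariant a b k
            rw [hqres, hTsupp] at this
            rw [this]
            exact Submodule.sub_starProjection_mem_orthogonal b
          -- the residual lies in the span of all columns
          have hqspan : q ∈ Submodule.span ℝ (Set.range a) := by
            have := omp_invariant a b k
            rw [hqres, hTsupp] at this
            rw [this]
            have hsub : Submodule.span ℝ (a '' (T : Set ι)) ≤ Submodule.span ℝ (Set.range a) :=
              Submodule.span_mono (Set.image_subset_range a _)
            exact Submodule.sub_mem _ hspan
              (hsub (Submodule.orthogonalProjectionOnto (Submodule.span ℝ (a '' (T : Set ι))) b).2)
          -- some column correlates with the residual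
          have hex : ∃ i, ⟪a i, q⟫ ≠ 0 := by
            by_contra hall
            push_neg at hall
            have hmem : q ∈ (Submodule.span ℝ (Set.range a))ᗮ := by
              rw [Submodule.mem_orthogonal]
              intro u hu
              refine Submodule.span_induction ?_ ?_ ?_ ?_ hu
              · rintro x ⟨i, rfl⟩; exact hall i
              · simp
              · intro x y _ _ hx hy; rw [inner_add_left, hx, hy, add_zero]
              · intro c x _ hx; rw [inner_smul_left, hx, mul_zero]
            have : ⟪q, q⟫ = 0 := (Submodule.mem_orthogonal _ q).mp hmem q hqspan
            exact hq (inner_self_eq_zero.mp this)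
          have hsel : ⟪a i₀, q⟫ ≠ 0 := by
            obtain ⟨i, hi⟩ := hex
            have h1 : |⟪a i, q⟫| ≤ |⟪a i₀, q⟫| := ompSelect_max a q i
            intro h0
            rw [h0, abs_zero] at h1
            exact hi (abs_eq_zero.mp (le_antisymm h1 (abs_nonneg _)))
          have hnotmem : a i₀ ∉ Submodule.span ℝ (a '' (T : Set ι)) := by
            intro hmem
            exact hsel ((Submodule.mem_orthogonal _ q).mp hperp (a i₀) hmem)
          have hinot : a i₀ ∉ a '' (T : Set ι) := fun h =>
            hnotmem (Submodule.subset_span h)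
          rw [hsupp]
          constructor
          · rw [Finset.coe_insert]
            intro x hx y hy hxy
            rcases Set.mem_insert_iff.mp hx with rfl | hx'
            · rcases Set.mem_insert_iff.mp hy with rfl | hy'
              · rfl
              · exact absurd (hxy ▸ Set.mem_image_of_mem a hy') hinot
            · rcases Set.mem_insert_iff.mp hy with rfl | hy'
              · exact absurd (hxy ▸ Set.mem_image_of_mem a hx') hinot
              · exact ih.1 hx' hy' hxy
          · rw [Finset.coe_insert, Set.image_insert_eq]
            exact LinearIndepOn.id_insert ih.2 hnotmem
        · have h1 : ompState a b (k + 1) = ompState a b k := by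
            simp [ompState, hq, hι]
          unfold ompSupport
          rw [h1]
          exact ih

end SSCOMP
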